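/- Let (B,⋄,(·,·)) be a finite-dimensional quadratic right Novikov algebra over a field k of characteristic 0, and let Δ : B → B⊗B be the unique linear map satisfying (Δ(x), y⊗z)₂ = (x, y⋄z) for all x,y,z ∈ B, where (u₁⊗u₂, y⊗z)₂ := (u₁,y)(u₂,z). Then (B,Δ) is a right Novikov coalgebra, i.e. for all x ∈ B: (Δ⊗id)Δ(x) − (id⊗τ)(Δ⊗id)Δ(x) = (id⊗Δ)Δ(x) − (id⊗τ)(id⊗Δ)Δ(x) and (id⊗Δ)Δ(x) = (τ⊗id)(id⊗Δ)Δ(x). -/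

import Mathlib

open TensorProduct

noncomputable section

variable {k : Type*} [Field k]
section AlgDefs
variable {A : Type*} [AddCommGroup A] [Module k A]

/-- A pre-Lie algebra structure: `(a∘b)∘c − a∘(b∘c) = (b∘a)∘c − b∘(a∘c)`. -/
def IsPreLie (op : A →ₗ[k] A →ₗ[k] A) : Prop :=
  ∀ a b c : A, op (op a b) c - op a (op b c) = op (op b a) c - op b (op a c)

/-- A Novikov algebra: a pre-Lie algebra with `(a∘b)∘c = (a∘c)∘b`. -/
def IsNovikov (op : A →ₗ[k] A →ₗ[k] A) : Prop :=
  IsPreLie op ∧ ∀ a b c : A, op (op a b) c = op (op a c) b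

/-- A pre-Novikov algebra with operations `l = ◁` and `r = ▷`,
writing `a∘b := a◁b + a▷b`. -/
def IsPreNovikov (l r : A →ₗ[k] A →ₗ[k] A) : Prop :=
  (∀ a b c : A, r a (r b c) = r (l a b + r a b) c + r b (r a c) - r (l b a + r b a) c) ∧
  (∀ a b c : A, r a (l b c) = l (r a b) c + l b (l a c + r a c) - l (l b a) c) ∧
  (∀ a b c : A, r (l a b + r a b) c = l (r a c) b) ∧
  (∀ a b c : A, l (l a b) c = l (l a c) b)

/-- A right Novikov algebra. -/
def IsRightNovikov (d : A →ₗ[k] A →ₗ[k] A) : Prop :=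
  (∀ x y z : A, d (d x y) z - d x (d y z) = d (d x z) y - d x (d z y)) ∧
  (∀ x y z : A, d x (d y z) = d y (d x z))

/-- A right Novikov dialgebra with operations `dl = ⊣` and `dr = ⊢`. -/
def IsRightNovikovDialgebra (dl dr : A →ₗ[k] A →ₗ[k] A) : Prop :=
  (∀ x y z : A, dr x (dr y z) = dr y (dr x z)) ∧
  (∀ x y z : A, dr x (dl y z) = dl y (dl x z)) ∧
  (∀ x y z : A, dr (dr x y - dl x y) z = 0) ∧
  (∀ x y z : A, dl x (dr y z - dl y z) = 0) ∧
  (∀ x y z : A, dr x (dr y z - dl z y) = dr (dr x y) z - dl (dr x z) y) ∧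
  (∀ x y z : A, dl x (dr y z - dl z y) = dl (dl x y) z - dl (dl x z) y)

/-- A quadratic right Novikov algebra: a right Novikov algebra with a symmetric
nondegenerate bilinear form satisfying `(x⋄y,z) = −(x, y⋄z + z⋄y)`. -/
def IsQuadraticRightNovikov (d : A →ₗ[k] A →ₗ[k] A) (bf : A →ₗ[k] A →ₗ[k] k) : Prop :=
  IsRightNovikov d ∧ (∀ x y : A, bf x y = bf y x) ∧
  (∀ x : A, (∀ y : A, bf x y = 0) → x = 0) ∧
  (∀ x y z : A, bf (d x y) z = - bf x (d y z + d z y))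

/-- A quadratic pre-Lie algebra: a pre-Lie algebra with a skew-symmetric nondegenerate
bilinear form satisfying `ω(u∘v,w) = −ω(v, u∘w − w∘u)`. -/
def IsQuadraticPreLie (op : A →ₗ[k] A →ₗ[k] A) (w : A →ₗ[k] A →ₗ[k] k) : Prop :=
  IsPreLie op ∧ (∀ u v : A, w u v = - w v u) ∧
  (∀ u : A, (∀ v : A, w u v = 0) → u = 0) ∧
  (∀ u v x : A, w (op u v) x = - w v (op u x - op x u))

end AlgDefs
section CoDefs
variable {A : Type*} [AddCommGroup A] [Module k A]

/-- `(f ⊗ id)` on `A⊗A`, landing in `A⊗(A⊗A)` via the associator. -/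
def lmap3 (f : A →ₗ[k] A ⊗[k] A) : A ⊗[k] A →ₗ[k] A ⊗[k] (A ⊗[k] A) :=
  (TensorProduct.assoc k A A A).toLinearMap ∘ₗ TensorProduct.map f LinearMap.id

/-- `(id ⊗ f)` on `A⊗A`, landing in `A⊗(A⊗A)`. -/
def rmap3 (f : A →ₗ[k] A ⊗[k] A) : A ⊗[k] A →ₗ[k] A ⊗[k] (A ⊗[k] A) :=
  TensorProduct.map LinearMap.id f

/-- `τ ⊗ id` on the triple tensor product `A⊗(A⊗A)`: `a⊗(b⊗c) ↦ b⊗(a⊗c)`. -/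
def swap12 : A ⊗[k] (A ⊗[k] A) →ₗ[k] A ⊗[k] (A ⊗[k] A) :=
  (TensorProduct.assoc k A A A).toLinearMap ∘ₗ
    TensorProduct.map (TensorProduct.comm k A A).toLinearMap LinearMap.id ∘ₗ
    (TensorProduct.assoc k A A A).symm.toLinearMap

/-- `id ⊗ τ` on the triple tensor product `A⊗(A⊗A)`: `a⊗(b⊗c) ↦ a⊗(c⊗b)`. -/
def swap23 : A ⊗[k] (A ⊗[k] A) →ₗ[k] A ⊗[k] (A ⊗[k] A) :=
  TensorProduct.map LinearMap.id (TensorProduct.comm k A A).toLinearMap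

/-- The flip `τ` on `A ⊗ A`. -/
def tau2 : A ⊗[k] A →ₗ[k] A ⊗[k] A := (TensorProduct.comm k A A).toLinearMap

/-- A pre-Novikov coalgebra `(A, α, β)`. -/
def IsPreNovikovCoalgebra (α β : A →ₗ[k] A ⊗[k] A) : Prop :=
  (∀ a : A, lmap3 α (α a) + swap12 (rmap3 α (β a)) - rmap3 (α + β) (α a)
      - swap12 (lmap3 β (α a)) = 0) ∧
  (∀ a : A, rmap3 β (β a) + swap12 (lmap3 (α + β) (β a)) - lmap3 (α + β) (β a)
      - swap12 (rmap3 β (β a)) = 0) ∧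
  (∀ a : A, swap23 (lmap3 β (α a)) - lmap3 (α + β) (β a) = 0) ∧
  (∀ a : A, swap23 (lmap3 α (α a)) - lmap3 α (α a) = 0)

/-- A right Novikov co-dialgebra `(B, Δα, Δβ)` (denoted `(A, Da, Db)` here). -/
def IsRightNovikovCoDialgebra (Da Db : A →ₗ[k] A ⊗[k] A) : Prop :=
  (∀ x : A, rmap3 Db (Db x) = swap12 (rmap3 Db (Db x))) ∧
  (∀ x : A, rmap3 Da (Db x) = swap12 (rmap3 Da (Da x))) ∧
  (∀ x : A, lmap3 Db (Db x) = lmap3 Da (Db x)) ∧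
  (∀ x : A, rmap3 Db (Da x) = rmap3 Da (Da x)) ∧
  (∀ x : A, rmap3 Db (Db x) - swap23 (rmap3 Da (Db x))
      = lmap3 Db (Db x) - swap23 (lmap3 Db (Da x))) ∧
  (∀ x : A, rmap3 Db (Da x) - swap23 (rmap3 Da (Da x))
      = lmap3 Da (Da x) - swap23 (lmap3 Da (Da x)))

/-- A pre-Lie coalgebra `(L, δ)`. -/
def IsPreLieCoalgebra (δ : A →ₗ[k] A ⊗[k] A) : Prop :=
  ∀ a : A, rmap3 δ (δ a) - swap12 (rmap3 δ (δ a)) = lmap3 δ (δ a) - swap12 (lmap3 δ (δ a))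

/-- A right Novikov coalgebra `(B, Δ)`. -/
def IsRightNovikovCoalgebra (Δ : A →ₗ[k] A ⊗[k] A) : Prop :=
  (∀ x : A, lmap3 Δ (Δ x) - swap23 (lmap3 Δ (Δ x))
      = rmap3 Δ (Δ x) - swap23 (rmap3 Δ (Δ x))) ∧
  (∀ x : A, rmap3 Δ (Δ x) = swap12 (rmap3 Δ (Δ x)))

end CoDefs

section Proof11Aux
variable {B : Type*} [AddCommGroup B] [Module k B]

/-- Pairing on a twofold tensor product induced by a bilinear form. -/
def p2 (bf : B →ₗ[k] B →ₗ[k] k) (y z : B) : B ⊗[k] B →ₗ[k] k :=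
  (TensorProduct.lid k k).toLinearMap ∘ₗ TensorProduct.map (bf.flip y) (bf.flip z)

/-- Pairing on a threefold tensor product induced by a bilinear form. -/
def p3 (bf : B →ₗ[k] B →ₗ[k] k) (y z w : B) : B ⊗[k] (B ⊗[k] B) →ₗ[k] k :=
  (TensorProduct.lid k k).toLinearMap ∘ₗ TensorProduct.map (bf.flip y) (p2 bf z w)

@[simp] lemma p2_tmul (bf : B →ₗ[k] B →ₗ[k] k) (y z a b : B) :
    p2 bf y z (a ⊗ₜ[k] b) = bf a y * bf b z := by
  simp [p2, smul_eq_mul]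

lemma p2_eq_lid (bf : B →ₗ[k] B →ₗ[k] k) (y z : B) (t : B ⊗[k] B) :
    p2 bf y z t = TensorProduct.lid k k (TensorProduct.map (bf.flip y) (bf.flip z) t) := rfl

@[simp] lemma p3_tmul (bf : B →ₗ[k] B →ₗ[k] k) (y z w a b c : B) :
    p3 bf y z w (a ⊗ₜ[k] (b ⊗ₜ[k] c)) = bf a y * (bf b z * bf c w) := by
  simp [p3, smul_eq_mul]

lemma p3_tmul2 (bf : B →ₗ[k] B →ₗ[k] k) (y z w a : B) (u : B ⊗[k] B) :
    p3 bf y z w (a ⊗ₜ[k] u) = bf a y * p2 bf z w u := by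
  simp [p3, smul_eq_mul]

lemma p3_inj [FiniteDimensional k B] (bf : B →ₗ[k] B →ₗ[k] k)
    (hnd : ∀ x : B, (∀ y : B, bf x y = 0) → x = 0)
    {T S : B ⊗[k] (B ⊗[k] B)}
    (h : ∀ y z w : B, p3 bf y z w T = p3 bf y z w S) : T = S := by
  have hinj : Function.Injective bf := by
    rw [← LinearMap.ker_eq_bot, LinearMap.ker_eq_bot']
    intro x hx
    exact hnd x fun y => congrFun (congrArg DFunLike.coe hx) y
  have hsurj : Function.Surjective bf :=
    (LinearMap.injective_iff_surjective_of_finrank_eq_finrank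
      Subspace.dual_finrank_eq.symm).mp hinj
  let e : B ≃ₗ[k] Module.Dual k B := LinearEquiv.ofBijective bf ⟨hinj, hsurj⟩
  let E2 : B ⊗[k] B ≃ₗ[k] Module.Dual k (B ⊗[k] B) :=
    (TensorProduct.congr e e).trans (TensorProduct.dualDistribEquiv k B B)
  let E3 : B ⊗[k] (B ⊗[k] B) ≃ₗ[k] Module.Dual k (B ⊗[k] (B ⊗[k] B)) :=
    (TensorProduct.congr e E2).trans (TensorProduct.dualDistribEquiv k B (B ⊗[k] B))
  have key : ∀ (U : B ⊗[k] (B ⊗[k] B)) (y z w : B),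
      E3 U (y ⊗ₜ[k] (z ⊗ₜ[k] w)) = p3 bf y z w U := by
    intro U y z w
    induction U using TensorProduct.induction_on with
    | zero => simp
    | tmul a u =>
      induction u using TensorProduct.induction_on with
      | zero => simp
      | tmul b c =>
        simp [E3, E2, e, TensorProduct.dualDistribEquiv,
          TensorProduct.dualDistribEquivOfBasis, LinearEquiv.ofLinear_apply,
          mul_assoc]
        rfl
      | add u v hu hv =>
        simp only [TensorProduct.tmul_add, map_add, LinearMap.add_apply, hu, hv]
    | add U V hU hV =>
      simp only [map_add, LinearMap.add_apply, hU, hV]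
  apply E3.injective
  apply LinearMap.ext
  intro u
  induction u using TensorProduct.induction_on with
  | zero => simp
  | tmul y v =>
    induction v using TensorProduct.induction_on with
    | zero => simp
    | tmul z w => rw [key, key, h]
    | add v₁ v₂ h1 h2 => simp only [TensorProduct.tmul_add, map_add, h1, h2]
  | add u₁ u₂ h1 h2 => simp only [map_add, h1, h2]

lemma p3_swap12 (bf : B →ₗ[k] B →ₗ[k] k) (y z w : B) (T : B ⊗[k] (B ⊗[k] B)) :
    p3 bf y z w (swap12 T) = p3 bf z y w T := by
  induction T using TensorProduct.induction_on with
  | zero => simp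
  | tmul a u =>
    induction u using TensorProduct.induction_on with
    | zero => simp [swap12]
    | tmul b c =>
      simp only [swap12, LinearMap.coe_comp, Function.comp_apply, LinearEquiv.coe_coe,
        TensorProduct.assoc_symm_tmul, TensorProduct.map_tmul, TensorProduct.comm_tmul,
        LinearMap.id_coe, id_eq, TensorProduct.assoc_tmul, p3_tmul]
      ring
    | add u v hu hv =>
      simp only [TensorProduct.tmul_add, map_add, hu, hv]
  | add U V hU hV => simp only [map_add, hU, hV]

lemma p3_swap23 (bf : B →ₗ[k] B →ₗ[k] k) (y z w : B) (T : B ⊗[k] (B ⊗[k] B)) :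
    p3 bf y z w (swap23 T) = p3 bf y w z T := by
  induction T using TensorProduct.induction_on with
  | zero => simp
  | tmul a u =>
    induction u using TensorProduct.induction_on with
    | zero => simp [swap23]
    | tmul b c =>
      simp only [swap23, TensorProduct.map_tmul, LinearEquiv.coe_coe,
        TensorProduct.comm_tmul, LinearMap.id_coe, id_eq, p3_tmul]
      ring
    | add u v hu hv =>
      simp only [TensorProduct.tmul_add, map_add, hu, hv]
  | add U V hU hV => simp only [map_add, hU, hV]

/-- Pairing on a twofold tensor product from two functionals. -/
def p2' (g h : B →ₗ[k] k) : B ⊗[k] B →ₗ[k] k :=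
  (TensorProduct.lid k k).toLinearMap ∘ₗ TensorProduct.map g h

@[simp] lemma p2'_tmul (g h : B →ₗ[k] k) (a b : B) :
    p2' g h (a ⊗ₜ[k] b) = g a * h b := by
  simp [p2', smul_eq_mul]

lemma p3_lmap3' (bf : B →ₗ[k] B →ₗ[k] k) (f : B →ₗ[k] B ⊗[k] B)
    (y z w : B) (t : B ⊗[k] B)
    (g : B →ₗ[k] k) (hg : ∀ a : B, p2 bf y z (f a) = g a) :
    p3 bf y z w (lmap3 f t) = p2' g (bf.flip w) t := by
  induction t using TensorProduct.induction_on with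
  | zero => simp [p2']
  | tmul a b =>
    have h1 : ∀ (u : B ⊗[k] B) (c : B),
        p3 bf y z w ((TensorProduct.assoc k B B B) (u ⊗ₜ[k] c)) =
          p2 bf y z u * bf c w := by
      intro u c
      induction u using TensorProduct.induction_on with
      | zero => simp
      | tmul a' b' => simp [mul_assoc]
      | add u v hu hv =>
        simp only [TensorProduct.add_tmul, map_add, hu, hv, add_mul]
    simp only [lmap3, LinearMap.coe_comp, Function.comp_apply, LinearEquiv.coe_coe,
      TensorProduct.map_tmul, LinearMap.id_coe, id_eq, h1, hg, p2'_tmul,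
      LinearMap.flip_apply]
  | add u v hu hv => simp only [map_add, hu, hv, p2', LinearMap.coe_comp,
      Function.comp_apply]

lemma p3_rmap3 (bf : B →ₗ[k] B →ₗ[k] k) (f : B →ₗ[k] B ⊗[k] B)
    (y z w : B) (t : B ⊗[k] B)
    (g : B →ₗ[k] k) (hg : ∀ b : B, p2 bf z w (f b) = g b) :
    p3 bf y z w (rmap3 f t) = p2' (bf.flip y) g t := by
  induction t using TensorProduct.induction_on with
  | zero => simp [p2']
  | tmul a b =>
    simp only [rmap3, TensorProduct.map_tmul, LinearMap.id_coe, id_eq, p3_tmul2,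
      hg, p2'_tmul, LinearMap.flip_apply]
  | add u v hu hv => simp only [map_add, hu, hv, p2', LinearMap.coe_comp,
      Function.comp_apply]

end Proof11Aux

/-- For a finite-dimensional quadratic right Novikov algebra
`(B, ⋄, (·,·))`, the dual `Δ` of `⋄` under the form, characterized by
`(Δ(x), y⊗z)₂ = (x, y⋄z)`, makes `(B, Δ)` a right Novikov coalgebra. -/
theorem quadratic_rightNovikov_coalgebra (k B : Type*) [Field k] [CharZero k]
    [AddCommGroup B] [Module k B] [FiniteDimensional k B]
    (d : B →ₗ[k] B →ₗ[k] B) (bf : B →ₗ[k] B →ₗ[k] k)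
    (hq : IsQuadraticRightNovikov d bf)
    (Δ : B →ₗ[k] B ⊗[k] B)
    (hΔ : ∀ x y z : B,
      TensorProduct.lid k k (TensorProduct.map (bf.flip y) (bf.flip z) (Δ x))
        = bf x (d y z)) :
    IsRightNovikovCoalgebra Δ := by
  obtain ⟨⟨hpre, hperm⟩, hsym, hnd, hquad⟩ := hq
  have hp2 : ∀ (u v x : B), p2 bf u v (Δ x) = bf x (d u v) := fun u v x =>
    (p2_eq_lid bf u v (Δ x)).trans (hΔ x u v)
  have hl : ∀ (y z w x : B), p3 bf y z w (lmap3 Δ (Δ x)) = bf x (d (d y z) w) := by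
    intro y z w x
    rw [p3_lmap3' bf Δ y z w (Δ x) (bf.flip (d y z)) (fun a => by rw [hp2]; rfl)]
    exact hp2 (d y z) w x
  have hr : ∀ (y z w x : B), p3 bf y z w (rmap3 Δ (Δ x)) = bf x (d y (d z w)) := by
    intro y z w x
    rw [p3_rmap3 bf Δ y z w (Δ x) (bf.flip (d z w)) (fun b => by rw [hp2]; rfl)]
    exact hp2 y (d z w) x
  constructor
  · intro x
    apply p3_inj bf hnd
    intro y z w
    simp only [map_sub, p3_swap23, hl, hr]
    rw [← map_sub, ← map_sub]
    exact congrArg (bf x) (sub_eq_sub_iff_sub_eq_sub.mpr (hpre y z w))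
  · intro x
    apply p3_inj bf hnd
    intro y z w
    rw [p3_swap12, hr, hr]
    exact congrArg (bf x) (hperm y z w)
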